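/- Let ρ₁ ≥ ρ₂ ≥ ρ₃ ≥ ω and ρ₃ ≥ ρ₄ ≥ 2 be cardinals with ρ₁ > ρ₂ and cf(ρ₁) < ρ₄ = cf(ρ₄). Then cov(ρ₁, ρ₂, ρ₃, ρ₄) = sup { cov(ρ, ρ₂, ρ₃, ρ₄) : ρ₂ ≤ ρ < ρ₁ }. -/

import Mathlib

open Cardinal

noncomputable section

/-- The covering number `cov(ρ₁, ρ₂, ρ₃, ρ₄)`: least cardinality of `X ⊆ P_{ρ₂}(ρ₁)`
such that every `b ∈ P_{ρ₃}(ρ₁)` is covered by the union of fewer than `ρ₄` members of `X`. -/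
def cov (r1 r2 r3 r4 : Cardinal) : Cardinal :=
  sInf { c | ∃ X : Set (Set r1.out),
    (∀ x ∈ X, #x < r2) ∧
    (∀ b : Set r1.out, #b < r3 → ∃ Q : Set (Set r1.out), Q ⊆ X ∧ #Q < r4 ∧ b ⊆ ⋃₀ Q) ∧
    #X = c }

/-- The meeting number `m(ρ, λ)`. -/
def meet (ρ lam : Cardinal) : Cardinal :=
  sInf { c | ∃ Q : Set (Set lam.out),
    (∀ q ∈ Q, #q = ρ) ∧
    (∀ b : Set lam.out, #b = ρ → ∃ q ∈ Q, #(↥(b ∩ q)) = ρ) ∧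
    #Q = c }

/-- The density number `d(ρ, λ)`. -/
def dens (ρ lam : Cardinal) : Cardinal :=
  sInf { c | ∃ Q : Set (Set lam.out),
    (∀ q ∈ Q, #q = ρ) ∧
    (∀ b : Set lam.out, #b = ρ → ∃ q ∈ Q, q ⊆ b) ∧
    #Q = c }

/-- `ds(f)` for `f : λ → ρ`. -/
def ds (ρ lam : Cardinal) (f : lam.out → ρ.out) : Cardinal :=
  sInf { c | ∃ Z : Set (Set lam.out),
    (∀ z ∈ Z, #z = ρ) ∧
    (∀ B : Set lam.out, (∀ α : ρ.out, #(↥(B ∩ f ⁻¹' {α})) = lam) →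
      ∃ z ∈ Z, #(↥(f '' (z ∩ B))) = ρ) ∧
    #Z = c }

/-- The Džamonja–Shelah number `DS(ρ, λ) = sup { ds(f) : f : λ → ρ }`. -/
def DS (ρ lam : Cardinal) : Cardinal := ⨆ f : lam.out → ρ.out, ds ρ lam f

/-- Cofinality of a cardinal. -/
def cf (c : Cardinal) : Cardinal := c.ord.cof

/-- `u(σ, λ) = cov(λ, σ, σ, ω)`. -/
def u (σ lam : Cardinal) : Cardinal := cov lam σ σ ℵ₀

/-- The `o`-th iterated cardinal successor of `c`. -/
def succIter (c : Cardinal) (o : Ordinal) : Cardinal :=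
  Cardinal.preAleph (Cardinal.preAleph.symm c + o)


section Aux

variable {r2 r3 r4 : Cardinal}

lemma cov_mem (r1 : Cardinal) (h23 : r3 ≤ r2) (h4 : 2 ≤ r4) :
    ({x : Set r1.out | #x < r2} : Set (Set r1.out)) ∈ { X : Set (Set r1.out) |
      (∀ x ∈ X, #x < r2) ∧
      (∀ b : Set r1.out, #b < r3 → ∃ Q : Set (Set r1.out), Q ⊆ X ∧ #Q < r4 ∧ b ⊆ ⋃₀ Q) } := by
  refine ⟨fun x hx => hx, fun b hb => ⟨{b}, ?_, ?_, ?_⟩⟩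
  · intro q hq; rw [Set.mem_singleton_iff] at hq; subst hq
    exact hb.trans_le h23
  · rw [mk_singleton]; exact lt_of_lt_of_le one_lt_two h4
  · simp

lemma cov_witness (r1 : Cardinal) (h23 : r3 ≤ r2) (h4 : 2 ≤ r4) :
    ∃ X : Set (Set r1.out),
      (∀ x ∈ X, #x < r2) ∧
      (∀ b : Set r1.out, #b < r3 → ∃ Q : Set (Set r1.out), Q ⊆ X ∧ #Q < r4 ∧ b ⊆ ⋃₀ Q) ∧
      #X = cov r1 r2 r3 r4 := by
  have hne : { c | ∃ X : Set (Set r1.out),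
      (∀ x ∈ X, #x < r2) ∧
      (∀ b : Set r1.out, #b < r3 → ∃ Q : Set (Set r1.out), Q ⊆ X ∧ #Q < r4 ∧ b ⊆ ⋃₀ Q) ∧
      #X = c }.Nonempty := by
    obtain ⟨h1, h2⟩ := cov_mem r1 h23 h4
    exact ⟨_, _, h1, h2, rfl⟩
  obtain ⟨X, h1, h2, h3⟩ := csInf_mem hne
  exact ⟨X, h1, h2, h3⟩

lemma cov_le_mk (r1 : Cardinal) {X : Set (Set r1.out)}
    (h1 : ∀ x ∈ X, #x < r2)
    (h2 : ∀ b : Set r1.out, #b < r3 → ∃ Q : Set (Set r1.out), Q ⊆ X ∧ #Q < r4 ∧ b ⊆ ⋃₀ Q) :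
    cov r1 r2 r3 r4 ≤ #X :=
  csInf_le' ⟨X, h1, h2, rfl⟩

lemma cov_le_pow (r1 : Cardinal) (h23 : r3 ≤ r2) (h4 : 2 ≤ r4) :
    cov r1 r2 r3 r4 ≤ 2 ^ r1 := by
  obtain ⟨h1, h2⟩ := cov_mem r1 (r3 := r3) (r4 := r4) h23 h4
  refine (cov_le_mk r1 h1 h2).trans ?_
  calc #{x : Set r1.out | #x < r2} ≤ #(Set r1.out) := mk_set_le _
    _ = 2 ^ #(r1.out) := mk_set
    _ = 2 ^ r1 := by rw [mk_out]

lemma cov_mono {ρ ρ' : Cardinal} (h : ρ ≤ ρ') (h23 : r3 ≤ r2) (h4 : 2 ≤ r4) :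
    cov ρ r2 r3 r4 ≤ cov ρ' r2 r3 r4 := by
  obtain ⟨X, hX1, hX2, hX3⟩ := cov_witness ρ' (r3 := r3) h23 h4
  obtain ⟨j⟩ : Nonempty (ρ.out ↪ ρ'.out) := by
    rw [← Cardinal.le_def, mk_out, mk_out]; exact h
  have key : cov ρ r2 r3 r4 ≤ #((fun x => j ⁻¹' x) '' X) := by
    refine cov_le_mk ρ ?_ ?_
    · rintro x ⟨y, hy, rfl⟩
      exact (mk_preimage_of_injective j y j.injective).trans_lt (hX1 y hy)
    · intro b hb
      have hjb : #(j '' b) < r3 := mk_image_le.trans_lt hb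
      obtain ⟨Q, hQX, hQ4, hQcov⟩ := hX2 (j '' b) hjb
      refine ⟨(fun x => j ⁻¹' x) '' Q, Set.image_mono hQX, mk_image_le.trans_lt hQ4, ?_⟩
      intro a ha
      obtain ⟨q, hq, hjq⟩ := hQcov ⟨a, ha, rfl⟩
      exact ⟨j ⁻¹' q, Set.mem_image_of_mem _ hq, hjq⟩
  refine key.trans (mk_image_le.trans hX3.le)

lemma le_cov {ρ : Cardinal} (h2 : ℵ₀ ≤ r2) (h3 : ℵ₀ ≤ r3) (h23 : r3 ≤ r2) (h4 : 2 ≤ r4)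
    (hρ : r2 < ρ) : ρ ≤ cov ρ r2 r3 r4 := by
  obtain ⟨X, hX1, hX2, hX3⟩ := cov_witness ρ (r3 := r3) h23 h4
  have huniv : (⋃₀ X : Set ρ.out) = Set.univ := by
    refine Set.eq_univ_of_forall fun a => ?_
    have : #({a} : Set ρ.out) < r3 := by
      rw [mk_singleton]; exact lt_of_lt_of_le one_lt_aleph0 h3
    obtain ⟨Q, hQX, _, hQcov⟩ := hX2 {a} this
    obtain ⟨q, hq, haq⟩ := hQcov rfl
    exact ⟨q, hQX hq, haq⟩
  have hXne : X.Nonempty := by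
    rcases Set.eq_empty_or_nonempty X with h | h
    · exfalso
      have hne : Nonempty ρ.out := by
        rw [← Cardinal.mk_ne_zero_iff, mk_out]
        exact (aleph0_pos.trans_le (h2.trans hρ.le)).ne'
      obtain ⟨a⟩ := hne
      rw [h, Set.sUnion_empty] at huniv
      exact (huniv.symm ▸ Set.mem_univ a : a ∈ (∅ : Set ρ.out))
    · exact h
  have : Nonempty ↥X := hXne.to_subtype
  have hle : ρ ≤ #X * r2 := by
    calc ρ = #(ρ.out) := (mk_out ρ).symm
      _ = #(⋃₀ X : Set ρ.out) := by rw [huniv, mk_univ]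
      _ ≤ #X * ⨆ s : X, #s := mk_sUnion_le X
      _ ≤ #X * r2 := by
          gcongr
          exact ciSup_le fun s => (hX1 s s.2).le
  have hmax : ρ ≤ max #X r2 := by
    refine hle.trans ((mul_le_max _ _).trans ?_)
    simp only [max_le_iff]
    refine ⟨⟨le_max_left _ _, le_max_right _ _⟩, le_max_of_le_right h2⟩
  rcases max_cases #X r2 with ⟨heq, _⟩ | ⟨heq, _⟩
  · rw [heq] at hmax; exact hmax.trans_eq hX3
  · rw [heq] at hmax; exact absurd hmax (not_le.2 hρ)

end Aux

theorem stmt11 (r1 r2 r3 r4 : Cardinal) (h12 : r2 < r1) (h23 : r3 ≤ r2)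
    (h3 : ℵ₀ ≤ r3) (h34 : r4 ≤ r3) (h4 : 2 ≤ r4)
    (hcf : cf r1 < r4) (hreg : cf r4 = r4) :
    cov r1 r2 r3 r4 = sSup { c | ∃ ρ, r2 ≤ ρ ∧ ρ < r1 ∧ c = cov ρ r2 r3 r4 } := by
  unfold cf at hcf hreg
  have h2 : ℵ₀ ≤ r2 := h3.trans h23
  have h1inf : ℵ₀ ≤ r1 := h2.trans h12.le
  set T := { c | ∃ ρ, r2 ≤ ρ ∧ ρ < r1 ∧ c = cov ρ r2 r3 r4 } with hT
  have hbdd : BddAbove T := by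
    refine ⟨2 ^ r1, fun c hc => ?_⟩
    obtain ⟨ρ, hρ1, hρ2, rfl⟩ := hc
    exact (cov_le_pow ρ h23 h4).trans (power_le_power_left two_ne_zero hρ2.le)
  have hr4inf : ℵ₀ ≤ r4 := by
    by_contra h
    push_neg at h
    obtain ⟨n, rfl⟩ := lt_aleph0.1 h
    have hn : 2 ≤ n := by exact_mod_cast h4
    obtain ⟨m, rfl⟩ : ∃ m, n = m + 1 := ⟨n - 1, by omega⟩
    have h1 : ((m + 1 : ℕ) : Cardinal).ord.cof = 1 := by
      rw [ord_nat]
      have : ((m + 1 : ℕ) : Ordinal) = Order.succ ((m : ℕ) : Ordinal) := by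
        push_cast
        rw [Ordinal.add_one_eq_succ]
      rw [this, Ordinal.cof_succ]
    rw [hreg] at h1
    have : (m + 1 : ℕ) = 1 := by exact_mod_cast h1
    omega
  have hr4reg : Cardinal.IsRegular r4 := ⟨hr4inf, hreg.ge⟩
  have hsucc : Order.succ r2 < r1 := by
    rcases lt_or_ge (Order.succ r2) r1 with h | h
    · exact h
    · exfalso
      have h1 : r1 = Order.succ r2 := le_antisymm h (Order.succ_le_of_lt h12)
      have h5 : r1.ord.cof = r1 := by
        rw [h1]; exact (isRegular_succ h2).cof_eq
      rw [h5] at hcf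
      exact absurd (hcf.trans_le (h34.trans h23)) (not_lt.2 h12.le)
  have hmemT : ∀ ρ, r2 ≤ ρ → ρ < r1 → cov ρ r2 r3 r4 ≤ sSup T :=
    fun ρ hρ1 hρ2 => le_csSup hbdd ⟨ρ, hρ1, hρ2, rfl⟩
  have hR2 : r2 < sSup T := by
    have hc1 : Order.succ r2 ≤ cov (Order.succ r2) r2 r3 r4 :=
      le_cov h2 h3 h23 h4 (Order.lt_succ r2)
    exact (Order.lt_succ r2).trans_le
      (hc1.trans (hmemT _ (Order.le_succ r2) hsucc))
  have hRinf : ℵ₀ ≤ sSup T := h2.trans hR2.le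
  have hcfR : r1.ord.cof ≤ sSup T := ((hcf.trans_le (h34.trans h23)).trans hR2).le
  refine le_antisymm ?_ ?_
  · -- LHS ≤ RHS
    obtain ⟨e⟩ : Nonempty (r1.out ≃ r1.ord.ToType) :=
      Cardinal.eq.1 (by rw [mk_out, Cardinal.mk_toType, card_ord])
    haveI : IsWellOrder r1.ord.ToType (· < ·) := isWellOrder_lt
    obtain ⟨S, hSU, hScard⟩ :=
      Ordinal.cof_eq r1.ord.ToType
    rw [Ordinal.cof_toType] at hScard
    set A : r1.ord.ToType → Set r1.out := fun s => {a | e a ≤ s} with hA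
    have hAcard : ∀ s, #(A s) < r1 := by
      intro s
      have h1 : #(A s) ≤ #(Set.Iic s) :=
        mk_preimage_of_injective e (Set.Iic s) e.injective
      have h2' : #(Set.Iic s) ≤ #(Set.Iio s) + 1 := by
        rw [← Set.Iio_insert]; exact mk_insert_le
      exact (h1.trans h2').trans_lt
        (add_lt_of_lt h1inf (mk_Iio_ord_toType s) (one_lt_aleph0.trans_le h1inf))
    set ρf : r1.ord.ToType → Cardinal := fun s => max (#(A s)) r2 with hρf
    have hρf1 : ∀ s, r2 ≤ ρf s := fun s => le_max_right _ _
    have hρf2 : ∀ s, ρf s < r1 := fun s => max_lt (hAcard s) h12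
    have hcovle : ∀ s, cov (ρf s) r2 r3 r4 ≤ sSup T := fun s => hmemT _ (hρf1 s) (hρf2 s)
    have hembA : ∀ s, Nonempty (↥(A s) ↪ (ρf s).out) := by
      intro s
      rw [← Cardinal.le_def, mk_out]
      exact le_max_left _ _
    set f : ∀ s, ↥(A s) ↪ (ρf s).out := fun s => (hembA s).some with hf
    choose Xs hXs1 hXs2 hXs3 using
      fun s => cov_witness (ρf s) (r2 := r2) (r3 := r3) (r4 := r4) h23 h4
    set pull : ∀ s, Set (ρf s).out → Set r1.out :=
      fun s x => Subtype.val '' (f s ⁻¹' x) with hpull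
    have hpull_card : ∀ s x, #(pull s x) ≤ #x := fun s x =>
      mk_image_le.trans (mk_preimage_of_injective _ _ (f s).injective)
    set X : Set (Set r1.out) := ⋃ s ∈ S, pull s '' Xs s with hX
    have hmain : cov r1 r2 r3 r4 ≤ #X := by
      refine cov_le_mk r1 ?_ ?_
      · intro x hx
        simp only [hX, Set.mem_iUnion] at hx
        obtain ⟨s, hs, q, hq, rfl⟩ := hx
        exact (hpull_card s q).trans_lt (hXs1 s q hq)
      · intro b hb
        have hbs : ∀ s, #((f s) '' (Subtype.val ⁻¹' b) : Set (ρf s).out) < r3 := fun s =>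
          (mk_image_le.trans
            (mk_preimage_of_injective _ _ Subtype.val_injective)).trans_lt hb
        choose Qs hQs1 hQs2 hQs3 using fun s => hXs2 s _ (hbs s)
        refine ⟨⋃ s ∈ S, pull s '' Qs s, ?_, ?_, ?_⟩
        · exact Set.iUnion₂_mono fun s hs => Set.image_mono (hQs1 s)
        · calc #(⋃ s ∈ S, pull s '' Qs s) = #(⋃ s : S, pull s '' Qs s) := by
                rw [Set.biUnion_eq_iUnion]
            _ ≤ sum fun s : S => #(pull s '' Qs s) := mk_iUnion_le_sum_mk
            _ < r4 := by
                refine sum_lt_of_isRegular hr4reg ?_ fun s => mk_image_le.trans_lt (hQs2 s)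
                rw [hScard]; exact hcf
        · intro a ha
          obtain ⟨s, hs, hns⟩ := hSU (e a)
          have haA : a ∈ A s := hns
          have hmem : f s ⟨a, haA⟩ ∈ (f s) '' (Subtype.val ⁻¹' b) := ⟨⟨a, haA⟩, ha, rfl⟩
          obtain ⟨q, hq, hfq⟩ := hQs3 s hmem
          exact ⟨pull s q, Set.mem_biUnion hs (Set.mem_image_of_mem _ hq), ⟨⟨a, haA⟩, hfq, rfl⟩⟩
    have hXle : #X ≤ sSup T := by
      calc #X = #(⋃ s : S, pull s '' Xs s) := by rw [hX, Set.biUnion_eq_iUnion]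
        _ ≤ sum fun s : S => #(pull s '' Xs s) := mk_iUnion_le_sum_mk
        _ ≤ sum fun _ : S => sSup T :=
            sum_le_sum _ _ fun s => (mk_image_le.trans (hXs3 s).le).trans (hcovle s)
        _ = #S * sSup T := sum_const' _ _
        _ ≤ sSup T := by
            rw [hScard]
            refine (mul_le_max _ _).trans ?_
            simp only [max_le_iff]
            exact ⟨⟨hcfR, le_rfl⟩, hRinf⟩
    exact hmain.trans hXle
  · -- RHS ≤ LHS
    refine csSup_le ⟨cov r2 r2 r3 r4, r2, le_rfl, h12, rfl⟩ fun c hc => ?_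
    obtain ⟨ρ, hρ1, hρ2, rfl⟩ := hc
    exact cov_mono hρ2.le h23 h4
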